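/- For every integer k ≥ 1 and every integer n with 2^{2k-1} ≤ n ≤ 2^{2k+1} - 1, we have S(n) ≤ 2^{k+1}; moreover, S(n) = 2^{k+1} holds only when n = 2^{2k+1} - 1. -/

import Mathlib

/-- `inv2 n` is the number of inversions in the binary representation of `n`,
i.e. the number of pairs of bit positions `a > b` such that bit `a` of `n` is `1`
and bit `b` of `n` is `0`. -/
def inv2 (n : ℕ) : ℕ :=
  ((Finset.range (n + 1) ×ˢ Finset.range (n + 1)).filter
    (fun p => p.2 < p.1 ∧ n.testBit p.1 = true ∧ n.testBit p.2 = false)).card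

/-- `iSeq n = (-1)^(inv2 n)`. -/
def iSeq (n : ℕ) : ℤ := (-1) ^ inv2 n


/-- The summatory function `S N = ∑_{0 ≤ n ≤ N} iSeq n`. -/
def S (N : ℕ) : ℤ := ∑ n ∈ Finset.range (N + 1), iSeq n

lemma lt_of_testBit' {n i : ℕ} (h : n.testBit i = true) : i < n := by
  have h1 : 2 ^ i ≤ n := by
    by_contra hc
    rw [Nat.testBit_lt_two_pow (by omega)] at h
    exact Bool.noConfusion h
  have h2 := Nat.lt_two_pow_self (n := i)
  omega

lemma testBit_odd_succ (n i : ℕ) : (2*n+1).testBit (i+1) = n.testBit i := by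
  rw [Nat.testBit_succ]
  congr 1
  omega

lemma testBit_even_succ (n i : ℕ) : (2*n).testBit (i+1) = n.testBit i := by
  rw [Nat.testBit_succ]
  congr 1
  omega

lemma testBit_odd_zero (n : ℕ) : (2*n+1).testBit 0 = true := by
  simp [Nat.testBit_zero]

lemma testBit_even_zero (n : ℕ) : (2*n).testBit 0 = false := by
  simp [Nat.testBit_zero]

lemma inv2_odd (n : ℕ) : inv2 (2*n+1) = inv2 n := by
  unfold inv2
  apply Finset.card_bij (fun p _ => (p.1 - 1, p.2 - 1))
  · rintro ⟨a, b⟩ hp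
    simp only [Finset.mem_filter, Finset.mem_product, Finset.mem_range] at hp ⊢
    obtain ⟨⟨ha, hb⟩, hba, hta, htb⟩ := hp
    have hb0 : b ≠ 0 := by
      intro h0; rw [h0, testBit_odd_zero] at htb; exact Bool.noConfusion htb
    have ha0 : a ≠ 0 := by omega
    obtain ⟨a', rfl⟩ : ∃ a', a = a' + 1 := ⟨a - 1, by omega⟩
    obtain ⟨b', rfl⟩ : ∃ b', b = b' + 1 := ⟨b - 1, by omega⟩
    rw [testBit_odd_succ] at hta htb
    have ha' := lt_of_testBit' hta
    refine ⟨⟨by omega, by omega⟩, by omega, by simpa using hta, by simpa using htb⟩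
  · rintro ⟨a, b⟩ hp ⟨c, d⟩ hq h
    simp only [Finset.mem_filter, Finset.mem_product, Finset.mem_range] at hp hq
    have hb0 : b ≠ 0 := by
      intro h0; rw [h0, testBit_odd_zero] at hp; simp at hp
    have hd0 : d ≠ 0 := by
      intro h0; rw [h0, testBit_odd_zero] at hq; simp at hq
    simp only [Prod.mk.injEq] at h ⊢
    omega
  · rintro ⟨a, b⟩ hp
    simp only [Finset.mem_filter, Finset.mem_product, Finset.mem_range] at hp
    obtain ⟨⟨ha, hb⟩, hba, hta, htb⟩ := hp
    refine ⟨(a+1, b+1), ?_, by simp⟩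
    simp only [Finset.mem_filter, Finset.mem_product, Finset.mem_range]
    rw [testBit_odd_succ, testBit_odd_succ]
    have := lt_of_testBit' hta
    exact ⟨⟨by omega, by omega⟩, by omega, hta, htb⟩

def ones (n : ℕ) : ℕ := ((Finset.range (n+1)).filter (fun a => n.testBit a = true)).card

lemma ones_odd (n : ℕ) : ones (2*n+1) = ones n + 1 := by
  unfold ones
  have key : (Finset.range (2*n+2)).filter (fun a => (2*n+1).testBit a = true)
      = insert 0 (((Finset.range (n+1)).filter (fun a => n.testBit a = true)).image (fun a => a + 1)) := by
    ext a
    simp only [Finset.mem_filter, Finset.mem_range, Finset.mem_insert, Finset.mem_image]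
    constructor
    · rintro ⟨ha, hta⟩
      rcases Nat.eq_zero_or_pos a with h0 | h0
      · exact Or.inl h0
      · right
        obtain ⟨a', rfl⟩ : ∃ a', a = a' + 1 := ⟨a - 1, by omega⟩
        rw [testBit_odd_succ] at hta
        exact ⟨a', ⟨by have := lt_of_testBit' hta; omega, hta⟩, rfl⟩
    · rintro (rfl | ⟨a', ⟨ha', hta'⟩, rfl⟩)
      · exact ⟨by omega, testBit_odd_zero n⟩
      · rw [testBit_odd_succ]
        have := lt_of_testBit' hta'
        exact ⟨by omega, hta'⟩
  rw [key, Finset.card_insert_of_notMem (by simp), Finset.card_image_of_injective _ (fun x y h => by omega)]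

lemma ones_even (n : ℕ) : ones (2*n) = ones n := by
  unfold ones
  apply Finset.card_bij (fun a _ => a - 1)
  · intro a ha
    simp only [Finset.mem_filter, Finset.mem_range] at ha ⊢
    obtain ⟨ha, hta⟩ := ha
    have h0 : a ≠ 0 := by
      intro h; rw [h, testBit_even_zero] at hta; exact Bool.noConfusion hta
    obtain ⟨a', rfl⟩ : ∃ a', a = a' + 1 := ⟨a - 1, by omega⟩
    rw [testBit_even_succ] at hta
    exact ⟨by have := lt_of_testBit' hta; omega, by simpa using hta⟩
  · intro a ha b hb h
    simp only [Finset.mem_filter, Finset.mem_range] at ha hb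
    have h0 : a ≠ 0 := by
      intro h'; rw [h', testBit_even_zero] at ha; simp at ha
    have h0' : b ≠ 0 := by
      intro h'; rw [h', testBit_even_zero] at hb; simp at hb
    omega
  · intro a ha
    simp only [Finset.mem_filter, Finset.mem_range] at ha
    refine ⟨a + 1, ?_, by simp⟩
    simp only [Finset.mem_filter, Finset.mem_range]
    rw [testBit_even_succ]
    have := lt_of_testBit' ha.2
    exact ⟨by omega, ha.2⟩

lemma inv2_even (n : ℕ) : inv2 (2*n) = inv2 n + ones n := by
  classical
  set s := ((Finset.range (2*n + 1) ×ˢ Finset.range (2*n + 1)).filter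
    (fun p => p.2 < p.1 ∧ (2*n).testBit p.1 = true ∧ (2*n).testBit p.2 = false)) with hs
  have hsplit := Finset.card_filter_add_card_filter_not (s := s) (p := fun p => p.2 = 0)
  have h1 : (s.filter (fun p => ¬ p.2 = 0)).card = inv2 n := by
    unfold inv2
    apply Finset.card_bij (fun p _ => (p.1 - 1, p.2 - 1))
    · rintro ⟨a, b⟩ hp
      simp only [hs, Finset.mem_filter, Finset.mem_product, Finset.mem_range] at hp
      obtain ⟨⟨⟨ha, hb⟩, hba, hta, htb⟩, hb0⟩ := hp
      have ha0 : a ≠ 0 := by omega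
      obtain ⟨a', rfl⟩ : ∃ a', a = a' + 1 := ⟨a - 1, by omega⟩
      obtain ⟨b', rfl⟩ : ∃ b', b = b' + 1 := ⟨b - 1, by omega⟩
      rw [testBit_even_succ] at hta htb
      have ha' := lt_of_testBit' hta
      simp only [Finset.mem_filter, Finset.mem_product, Finset.mem_range]
      exact ⟨⟨by omega, by omega⟩, by omega, by simpa using hta, by simpa using htb⟩
    · rintro ⟨a, b⟩ hp ⟨c, d⟩ hq h
      simp only [hs, Finset.mem_filter, Finset.mem_product, Finset.mem_range] at hp hq
      simp only [Prod.mk.injEq] at h ⊢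
      have : b ≠ 0 := hp.2
      have : d ≠ 0 := hq.2
      have : b < a := hp.1.2.1
      have : d < c := hq.1.2.1
      omega
    · rintro ⟨a, b⟩ hp
      simp only [Finset.mem_filter, Finset.mem_product, Finset.mem_range] at hp
      obtain ⟨⟨ha, hb⟩, hba, hta, htb⟩ := hp
      refine ⟨(a+1, b+1), ?_, by simp⟩
      simp only [hs, Finset.mem_filter, Finset.mem_product, Finset.mem_range]
      rw [testBit_even_succ, testBit_even_succ]
      have := lt_of_testBit' hta
      exact ⟨⟨⟨by omega, by omega⟩, by omega, hta, htb⟩, by omega⟩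
  have h2 : (s.filter (fun p => p.2 = 0)).card = ones n := by
    unfold ones
    apply Finset.card_bij (fun p _ => p.1 - 1)
    · rintro ⟨a, b⟩ hp
      simp only [hs, Finset.mem_filter, Finset.mem_product, Finset.mem_range] at hp
      obtain ⟨⟨⟨ha, hb⟩, hba, hta, htb⟩, hb0⟩ := hp
      have ha0 : a ≠ 0 := by omega
      obtain ⟨a', rfl⟩ : ∃ a', a = a' + 1 := ⟨a - 1, by omega⟩
      rw [testBit_even_succ] at hta
      have ha' := lt_of_testBit' hta
      simp only [Finset.mem_filter, Finset.mem_range]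
      exact ⟨by omega, by simpa using hta⟩
    · rintro ⟨a, b⟩ hp ⟨c, d⟩ hq h
      simp only [hs, Finset.mem_filter, Finset.mem_product, Finset.mem_range] at hp hq
      simp only [Prod.mk.injEq]
      have hb0 : b = 0 := hp.2
      have hd0 : d = 0 := hq.2
      have : b < a := hp.1.2.1
      have : d < c := hq.1.2.1
      constructor
      · omega
      · omega
    · intro a ha
      simp only [Finset.mem_filter, Finset.mem_range] at ha
      refine ⟨(a+1, 0), ?_, by simp⟩
      simp only [hs, Finset.mem_filter, Finset.mem_product, Finset.mem_range]
      rw [testBit_even_succ]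
      have := lt_of_testBit' ha.2
      refine ⟨⟨⟨by omega, by omega⟩, by omega, ha.2, testBit_even_zero n⟩, by trivial⟩
  have hgoal : inv2 (2*n) = s.card := rfl
  omega

noncomputable section

def tm (n : ℕ) : ℤ := (-1) ^ ones n

def V (N : ℕ) : ℤ := ∑ n ∈ Finset.range (N + 1), iSeq n * tm n

lemma iSeq_odd (n : ℕ) : iSeq (2*n+1) = iSeq n := by
  unfold iSeq; rw [inv2_odd]

lemma iSeq_even (n : ℕ) : iSeq (2*n) = tm n * iSeq n := by
  unfold iSeq tm; rw [inv2_even, pow_add]; ring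

lemma tm_odd (n : ℕ) : tm (2*n+1) = - tm n := by
  unfold tm; rw [ones_odd, pow_add]; ring

lemma tm_even (n : ℕ) : tm (2*n) = tm n := by
  unfold tm; rw [ones_even]

lemma tm_sq (n : ℕ) : tm n = 1 ∨ tm n = -1 := by
  unfold tm; rcases Nat.even_or_odd (ones n) with h | h
  · left; exact h.neg_one_pow
  · right; exact h.neg_one_pow

lemma iSeq_pm (n : ℕ) : iSeq n = 1 ∨ iSeq n = -1 := by
  unfold iSeq; rcases Nat.even_or_odd (inv2 n) with h | h
  · left; exact h.neg_one_pow
  · right; exact h.neg_one_pow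

lemma S_succ (n : ℕ) : S (n+1) = S n + iSeq (n+1) := by
  unfold S; rw [Finset.sum_range_succ]

lemma V_succ (n : ℕ) : V (n+1) = V n + iSeq (n+1) * tm (n+1) := by
  unfold V; rw [Finset.sum_range_succ]

lemma inv2_zero : inv2 0 = 0 := by decide

lemma S_zero : S 0 = 1 := by unfold S iSeq; simp [inv2_zero]

lemma V_zero : V 0 = 1 := by
  unfold V iSeq tm
  simp [inv2_zero, ones]

lemma SV_rec (n : ℕ) : S (2*n+1) = S n + V n ∧ V (2*n+1) = S n - V n := by
  induction n with
  | zero =>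
    have h1 : S 1 = S 0 + iSeq 1 := S_succ 0
    have h2 : V 1 = V 0 + iSeq 1 * tm 1 := V_succ 0
    have h3 : iSeq 1 = iSeq 0 := by simpa using iSeq_odd 0
    have h4 : tm 1 = - tm 0 := by simpa using tm_odd 0
    have h5 : iSeq 0 = 1 := by unfold iSeq; simp [inv2_zero]
    have h6 : tm 0 = 1 := by unfold tm; simp [ones]
    constructor
    · show S (2*0+1) = _
      norm_num [h1, h3, h5, S_zero, V_zero]
    · show V (2*0+1) = _
      norm_num [h2, h3, h4, h5, h6, S_zero, V_zero]
  | succ n ih =>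
    have e1 : 2*(n+1)+1 = (2*n+1) + 1 + 1 := by ring
    have hS : S (2*(n+1)+1) = S (2*n+1) + iSeq (2*n+2) + iSeq (2*n+3) := by
      rw [e1, S_succ, S_succ]
    have hV : V (2*(n+1)+1) = V (2*n+1) + iSeq (2*n+2) * tm (2*n+2) + iSeq (2*n+3) * tm (2*n+3) := by
      rw [e1, V_succ, V_succ]
    have he : iSeq (2*n+2) = tm (n+1) * iSeq (n+1) := by
      have := iSeq_even (n+1); rw [show 2*(n+1) = 2*n+2 by ring] at this; exact this
    have ho : iSeq (2*n+3) = iSeq (n+1) := by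
      have := iSeq_odd (n+1); rw [show 2*(n+1)+1 = 2*n+3 by ring] at this; exact this
    have hte : tm (2*n+2) = tm (n+1) := by
      have := tm_even (n+1); rw [show 2*(n+1) = 2*n+2 by ring] at this; exact this
    have hto : tm (2*n+3) = - tm (n+1) := by
      have := tm_odd (n+1); rw [show 2*(n+1)+1 = 2*n+3 by ring] at this; exact this
    have ht2 : tm (n+1) * tm (n+1) = 1 := by rcases tm_sq (n+1) with h | h <;> rw [h] <;> ring
    constructor
    · rw [hS, ih.1, he, ho, S_succ, V_succ]
      ring
    · rw [hV, ih.2, he, ho, S_succ, V_succ, hte, hto]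
      have : tm (n+1) * iSeq (n+1) * tm (n+1) = iSeq (n+1) := by
        rw [show tm (n+1) * iSeq (n+1) * tm (n+1) = iSeq (n+1) * (tm (n+1) * tm (n+1)) by ring, ht2]; ring
      rw [this]
      ring

lemma S_odd (n : ℕ) : S (2*n+1) = S n + V n := (SV_rec n).1
lemma V_odd (n : ℕ) : V (2*n+1) = S n - V n := (SV_rec n).2

lemma S_even (n : ℕ) : S (2*n) = S n + V n - iSeq n := by
  have h : S (2*n+1) = S (2*n) + iSeq (2*n+1) := S_succ (2*n)
  rw [iSeq_odd] at h
  rw [S_odd] at h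
  linarith

lemma V_even (n : ℕ) : V (2*n) = S n - V n + iSeq n * tm n := by
  have h : V (2*n+1) = V (2*n) + iSeq (2*n+1) * tm (2*n+1) := V_succ (2*n)
  rw [iSeq_odd, tm_odd, V_odd] at h
  have ht2 : tm n * tm n = 1 := by rcases tm_sq n with h' | h' <;> rw [h'] <;> ring
  nlinarith [ht2]

lemma parity_SV (n : ℕ) : (2:ℤ) ∣ (S n + V n) ∧ (2:ℤ) ∣ (S n - V n) := by
  induction n with
  | zero => rw [S_zero, V_zero]; norm_num
  | succ n ih =>
    obtain ⟨⟨a, ha⟩, ⟨b, hb⟩⟩ := ih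
    rw [S_succ, V_succ]
    rcases tm_sq (n+1) with h | h <;> rcases iSeq_pm (n+1) with h' | h' <;> rw [h, h'] <;>
      refine ⟨⟨?_, ?_⟩, ⟨?_, ?_⟩⟩
    exacts [a + 1, by linarith, b, by linarith,
      a - 1, by linarith, b, by linarith,
      a, by linarith, b + 1, by linarith,
      a, by linarith, b - 1, by linarith]


lemma parity_add (n : ℕ) : (2:ℤ) ∣ (S n + V n) := (parity_SV n).1
lemma parity_sub (n : ℕ) : (2:ℤ) ∣ (S n - V n) := (parity_SV n).2

lemma allones_succ (m : ℕ) : 2^(m+1) - 1 = 2*(2^m - 1) + 1 := by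
  have : 1 ≤ 2^m := Nat.one_le_two_pow
  have : (2:ℕ)^(m+1) = 2 * 2^m := by ring
  omega

lemma iSeq_allones (m : ℕ) : iSeq (2^m - 1) = 1 := by
  induction m with
  | zero => simp [iSeq, inv2_zero]
  | succ m ih => rw [allones_succ, iSeq_odd]; exact ih

lemma tm_allones (m : ℕ) : tm (2^m - 1) = (-1)^m := by
  induction m with
  | zero => simp [tm, ones]
  | succ m ih => rw [allones_succ, tm_odd, ih, pow_succ]; ring

lemma tm_allones_even (m : ℕ) : tm (2^(2*m) - 1) = 1 := by
  rw [tm_allones]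
  exact Even.neg_one_pow ⟨m, by ring⟩

lemma tm_allones_odd (m : ℕ) : tm (2^(2*m+1) - 1) = -1 := by
  rw [tm_allones]
  exact Odd.neg_one_pow ⟨m, by ring⟩

def EI (j : ℕ) : Prop := ∀ N, N < 2^(2*j) →
  S N ≤ 2^j ∧ (S N = 2^j → iSeq N = 1) ∧
  V N ≤ 2^j ∧ (V N = 2^j → N = 2^(2*j) - 1) ∧
  S N + V N ≤ 2^(j+1) ∧ (S N + V N = 2^(j+1) → N = 2^(2*j) - 1) ∧
  S N - V N ≤ 2^j ∧ (S N - V N = 2^j → N = 2^(2*j-1) - 1) ∧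
  2*(V N) - iSeq N - iSeq N * tm N ≤ 2^(j+1) - 2

def OI (j : ℕ) : Prop := ∀ N, N < 2^(2*j+1) →
  S N ≤ 2^(j+1) ∧ (S N = 2^(j+1) → N = 2^(2*j+1) - 1) ∧
  V N ≤ 2^j ∧ (V N = 2^j → N = 2^(2*j) - 1) ∧
  S N + V N ≤ 2^(j+1) ∧ (S N + V N = 2^(j+1) → iSeq N = 1) ∧
  S N - V N ≤ 2^(j+1) ∧ (S N - V N = 2^(j+1) → N = 2^(2*j+1) - 1) ∧
  2*(V N) - iSeq N - iSeq N * tm N ≤ 2^(j+1) - 2 ∧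
  2*(S N) - iSeq N + iSeq N * tm N ≤ 2^(j+2) - 2

lemma eqtop_iSeq {N m : ℕ} (h : N = 2^m - 1) : iSeq N = 1 := h ▸ iSeq_allones m
lemma eqtop_tm_even {N J : ℕ} (h : N = 2^(2*J) - 1) : tm N = 1 := h ▸ tm_allones_even J
lemma eqtop_tm_odd {N J : ℕ} (hJ : 1 ≤ J) (h : N = 2^(2*J-1) - 1) : tm N = -1 := by
  subst h
  obtain ⟨J', rfl⟩ := Nat.exists_eq_add_of_le hJ
  have h2 : 2*(1+J')-1 = 2*J'+1 := by omega
  rw [h2]; exact tm_allones_odd J'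

lemma step_EO (J : ℕ) (hJ : 1 ≤ J) (hE : EI J) : OI J := by
  have hp1 : (0:ℤ) < 2^J := by positivity
  have hp0 : (0:ℤ) < 2^(J-1) := by positivity
  have hpw0 : (2:ℤ)^J = 2 * 2^(J-1) := by
    have h : J = (J-1)+1 := by omega
    rw [h, pow_succ]; exact mul_comm _ _
  have hpw1 : (2:ℤ)^(J+1) = 2 * 2^J := by ring
  have hpw2 : (2:ℤ)^(J+2) = 4 * 2^J := by ring
  have hn1 : (1:ℕ) ≤ 2^(2*J) := Nat.one_le_two_pow
  have hn2 : (2:ℕ)^(2*J+1) = 2 * 2^(2*J) := by ring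
  have hn3 : (2:ℕ)^(2*J) = 2 * 2^(2*J-1) := by
    have h : 2*J = (2*J-1)+1 := by omega
    rw [h, pow_succ]; exact Nat.mul_comm _ _
  have hn4 : (1:ℕ) ≤ 2^(2*J-1) := Nat.one_le_two_pow
  intro n hn
  obtain ⟨N, rfl | rfl⟩ := Nat.even_or_odd' n
  · -- n = 2*N
    have hN : N < 2^(2*J) := by omega
    obtain ⟨e1, e1', e2, e2', e3, e3', e4, e4', e5⟩ := hE N hN
    have hpadd := parity_add N
    have hpsub := parity_sub N
    rw [S_even, V_even, iSeq_even, tm_even]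
    refine ⟨?_, ?_, ?_, ?_, ?_, ?_, ?_, ?_, ?_, ?_⟩
    · -- o1 even
      rcases iSeq_pm N with hi1 | hi1
      · omega
      · by_cases hc : S N + V N = 2^(J+1)
        · have := eqtop_iSeq (e3' hc); omega
        · omega
    · -- o1' even : impossible antecedent
      intro h; exfalso
      rcases iSeq_pm N with hi1 | hi1 <;> omega
    · -- o2 even
      rcases iSeq_pm N with hi1 | hi1 <;> rcases tm_sq N with ht1 | ht1 <;> rw [hi1, ht1]
      · by_cases hc : S N - V N = 2^J
        · have := eqtop_tm_odd hJ (e4' hc); omega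
        · omega
      · omega
      · omega
      · by_cases hc : S N - V N = 2^J
        · have := eqtop_iSeq (e4' hc); omega
        · omega
    · -- o2' even : impossible antecedent
      intro h; exfalso
      rcases iSeq_pm N with hi1 | hi1 <;> rcases tm_sq N with ht1 | ht1 <;>
        rw [hi1, ht1] at h <;> omega
    · -- o3 even
      rcases iSeq_pm N with hi1 | hi1 <;> rcases tm_sq N with ht1 | ht1 <;> rw [hi1, ht1]
      · omega
      · omega
      · by_cases hc : S N = 2^J
        · have := e1' hc; omega
        · omega
      · omega
    · -- o3' even
      rcases iSeq_pm N with hi1 | hi1 <;> rcases tm_sq N with ht1 | ht1 <;> rw [hi1, ht1] <;>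
        intro h
      · norm_num
      · exfalso; omega
      · exfalso; have := e1' (by omega); omega
      · norm_num
    · -- o4 even
      rcases iSeq_pm N with hi1 | hi1 <;> rcases tm_sq N with ht1 | ht1 <;>
        rw [hi1, ht1] at e5 ⊢ <;> omega
    · -- o4' even : impossible
      intro h; exfalso
      rcases iSeq_pm N with hi1 | hi1 <;> rcases tm_sq N with ht1 | ht1 <;>
        rw [hi1, ht1] at e5 h <;> omega
    · -- o5 even
      rcases iSeq_pm N with hi1 | hi1 <;> rcases tm_sq N with ht1 | ht1 <;> rw [hi1, ht1]
      · by_cases hc : S N - V N = 2^J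
        · have := eqtop_tm_odd hJ (e4' hc); omega
        · omega
      · omega
      · by_cases hc : S N - V N = 2^J
        · have := eqtop_iSeq (e4' hc); omega
        · omega
      · by_cases hc : S N - V N = 2^J
        · have := eqtop_iSeq (e4' hc); omega
        · omega
    · -- o6 even
      rcases iSeq_pm N with hi1 | hi1 <;> rcases tm_sq N with ht1 | ht1 <;> rw [hi1, ht1]
      · omega
      · by_cases hc : S N + V N = 2^(J+1)
        · have := eqtop_tm_even (e3' hc); omega
        · omega
      · by_cases hc : S N + V N = 2^(J+1)
        · have := eqtop_iSeq (e3' hc); omega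
        · omega
      · by_cases hc : S N + V N = 2^(J+1)
        · have := eqtop_tm_even (e3' hc); omega
        · omega
  · -- n = 2*N+1
    have hN : N < 2^(2*J) := by omega
    obtain ⟨e1, e1', e2, e2', e3, e3', e4, e4', e5⟩ := hE N hN
    have hpadd := parity_add N
    have hpsub := parity_sub N
    rw [S_odd, V_odd, iSeq_odd, tm_odd]
    refine ⟨by omega, ?_, by omega, ?_, by omega, ?_, by omega, ?_, ?_, ?_⟩
    · intro h; have := e3' h; omega
    · intro h; have := e4' (by omega); omega
    · intro h; exact e1' (by omega)
    · intro h; have := e2' (by omega); omega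
    · -- o5 odd
      rcases iSeq_pm N with hi1 | hi1 <;> rcases tm_sq N with ht1 | ht1 <;> rw [hi1, ht1]
      · by_cases hc : S N - V N = 2^J
        · have := eqtop_tm_odd hJ (e4' hc); omega
        · omega
      · omega
      · by_cases hc : S N - V N = 2^J
        · have := eqtop_tm_odd hJ (e4' hc); omega
        · omega
      · by_cases hc : S N - V N = 2^J
        · have := eqtop_iSeq (e4' hc); omega
        · omega
    · -- o6 odd
      rcases iSeq_pm N with hi1 | hi1 <;> rcases tm_sq N with ht1 | ht1 <;> rw [hi1, ht1]
      · omega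
      · by_cases hc : S N + V N = 2^(J+1)
        · have := eqtop_tm_even (e3' hc); omega
        · omega
      · by_cases hc : S N + V N = 2^(J+1)
        · have := eqtop_iSeq (e3' hc); omega
        · omega
      · by_cases hc : S N + V N = 2^(J+1)
        · have := eqtop_tm_even (e3' hc); omega
        · omega

lemma eqtop_tm_odd2 {N j : ℕ} (h : N = 2^(2*j+1) - 1) : tm N = -1 := h ▸ tm_allones_odd j

lemma step_OE (j : ℕ) (hO : OI j) : EI (j+1) := by
  have hzp : (0:ℤ) < 2^j := by positivity
  have hz0 : (2:ℤ)^(j+1) = 2 * 2^j := by ring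
  have hz1 : (2:ℤ)^(j+1+1) = 2 * 2^(j+1) := by ring
  have hz2 : (2:ℤ)^(j+2) = 2 * 2^(j+1) := by ring
  have hm1 : (1:ℕ) ≤ 2^(2*j+1) := Nat.one_le_two_pow
  have hm5 : (1:ℕ) ≤ 2^(2*j) := Nat.one_le_two_pow
  have hm2 : (2:ℕ)^(2*(j+1)) = 2 * 2^(2*j+1) := by
    have h : 2*(j+1) = (2*j+1)+1 := by omega
    rw [h, pow_succ]; exact Nat.mul_comm _ _
  have hm3 : (2:ℕ)^(2*(j+1)-1) = 2^(2*j+1) := by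
    have h : 2*(j+1)-1 = 2*j+1 := by omega
    rw [h]
  have hm4 : (2:ℕ)^(2*j+1) = 2 * 2^(2*j) := by rw [pow_succ]; exact Nat.mul_comm _ _
  intro n hn
  obtain ⟨N, rfl | rfl⟩ := Nat.even_or_odd' n
  · -- n = 2*N
    have hN : N < 2^(2*j+1) := by omega
    obtain ⟨o1, o1', o2, o2', o3, o3', o4, o4', o5, o6⟩ := hO N hN
    have hpadd := parity_add N
    have hpsub := parity_sub N
    rw [S_even, V_even, iSeq_even, tm_even]
    refine ⟨?_, ?_, ?_, ?_, ?_, ?_, ?_, ?_, ?_⟩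
    · -- e1 even
      rcases iSeq_pm N with hi1 | hi1
      · omega
      · by_cases hc : S N + V N = 2^(j+1)
        · have := o3' hc; omega
        · omega
    · -- e1' even : impossible antecedent
      intro h; exfalso
      rcases iSeq_pm N with hi1 | hi1 <;> omega
    · -- e2 even
      rcases iSeq_pm N with hi1 | hi1 <;> rcases tm_sq N with ht1 | ht1 <;> rw [hi1, ht1]
      · by_cases hc : S N - V N = 2^(j+1)
        · have := eqtop_tm_odd2 (o4' hc); omega
        · omega
      · omega
      · omega
      · by_cases hc : S N - V N = 2^(j+1)
        · have := eqtop_iSeq (o4' hc); omega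
        · omega
    · -- e2' even : impossible antecedent
      intro h; exfalso
      rcases iSeq_pm N with hi1 | hi1 <;> rcases tm_sq N with ht1 | ht1 <;>
        rw [hi1, ht1] at h <;> omega
    · -- e3 even
      rcases iSeq_pm N with hi1 | hi1 <;> rcases tm_sq N with ht1 | ht1 <;>
        rw [hi1, ht1] at o6 ⊢ <;> omega
    · -- e3' even : impossible
      intro h; exfalso
      rcases iSeq_pm N with hi1 | hi1 <;> rcases tm_sq N with ht1 | ht1 <;>
        rw [hi1, ht1] at o6 h <;> omega
    · -- e4 even
      rcases iSeq_pm N with hi1 | hi1 <;> rcases tm_sq N with ht1 | ht1 <;>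
        rw [hi1, ht1] at o5 ⊢ <;> omega
    · -- e4' even : impossible
      intro h; exfalso
      rcases iSeq_pm N with hi1 | hi1 <;> rcases tm_sq N with ht1 | ht1 <;>
        rw [hi1, ht1] at o5 h <;> omega
    · -- e5 even
      rcases iSeq_pm N with hi1 | hi1 <;> rcases tm_sq N with ht1 | ht1 <;> rw [hi1, ht1]
      · by_cases hc : S N - V N = 2^(j+1)
        · have := eqtop_tm_odd2 (o4' hc); omega
        · omega
      · omega
      · by_cases hc : S N - V N = 2^(j+1)
        · have := eqtop_iSeq (o4' hc); omega
        · omega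
      · by_cases hc : S N - V N = 2^(j+1)
        · have := eqtop_iSeq (o4' hc); omega
        · omega
  · -- n = 2*N+1
    have hN : N < 2^(2*j+1) := by omega
    obtain ⟨o1, o1', o2, o2', o3, o3', o4, o4', o5, o6⟩ := hO N hN
    have hpadd := parity_add N
    have hpsub := parity_sub N
    rw [S_odd, V_odd, iSeq_odd, tm_odd]
    refine ⟨by omega, ?_, by omega, ?_, by omega, ?_, by omega, ?_, ?_⟩
    · intro h; exact o3' h
    · intro h; have := o4' h; omega
    · intro h; have := o1' (by omega); omega
    · intro h; have := o2' (by omega); omega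
    · -- e5 odd
      rcases iSeq_pm N with hi1 | hi1 <;> rcases tm_sq N with ht1 | ht1 <;> rw [hi1, ht1]
      · by_cases hc : S N - V N = 2^(j+1)
        · have := eqtop_tm_odd2 (o4' hc); omega
        · omega
      · omega
      · by_cases hc : S N - V N = 2^(j+1)
        · have := eqtop_iSeq (o4' hc); omega
        · omega
      · by_cases hc : S N - V N = 2^(j+1)
        · have := eqtop_iSeq (o4' hc); omega
        · omega

lemma iSeq_zero : iSeq 0 = 1 := by simp [iSeq, inv2_zero]
lemma tm_zero : tm 0 = 1 := by simp [tm, ones]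
lemma iSeq_one : iSeq 1 = 1 := by simpa using iSeq_allones 1
lemma tm_one : tm 1 = -1 := by simpa using tm_allones_odd 0
lemma S_one : S 1 = 2 := by
  have h := S_succ 0
  norm_num [S_zero, iSeq_one] at h
  omega
lemma V_one : V 1 = 0 := by
  have h := V_succ 0
  norm_num [V_zero, iSeq_one, tm_one] at h
  omega

lemma EI_zero : EI 0 := by
  intro N hN
  interval_cases N
  norm_num [S_zero, V_zero, iSeq_zero, tm_zero]

lemma OI_zero : OI 0 := by
  intro N hN
  interval_cases N
  · norm_num [S_zero, V_zero, iSeq_zero, tm_zero]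
  · norm_num [S_one, V_one, iSeq_one, tm_one]

lemma main_inv (j : ℕ) : EI j ∧ OI j := by
  induction j with
  | zero => exact ⟨EI_zero, OI_zero⟩
  | succ j ih =>
    have e := step_OE j ih.2
    exact ⟨e, step_EO (j+1) (by omega) e⟩

end

theorem summatory_max_on_Ik (k : ℕ) (hk : 1 ≤ k) (n : ℕ)
    (h₁ : 2 ^ (2 * k - 1) ≤ n) (h₂ : n ≤ 2 ^ (2 * k + 1) - 1) :
    S n ≤ 2 ^ (k + 1) ∧ (S n = 2 ^ (k + 1) → n = 2 ^ (2 * k + 1) - 1) := by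
  have h1 : (1:ℕ) ≤ 2^(2*k+1) := Nat.one_le_two_pow
  have hn : n < 2^(2*k+1) := by omega
  obtain ⟨o1, o1', _⟩ := (main_inv k).2 n hn
  exact ⟨o1, o1'⟩
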